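/- Hard one-step strengthening is not monotone: there exist syntactic protocols Q ⊆ P and an initial gossip graph G with Q^□(G) ⊄ P^□(G). Concretely, let G be the 'spaceship' graph on agents {0,1,2,3} with N the reflexive closure of {(0,1),(3,1),(1,2)} and S the identity, let P = LNS and Q = LNS^♦ (the soft look-ahead strengthening of LNS). Then Q ⊆ P (the extension of LNS^♦ is contained in that of LNS on every initial gossip graph), yet the call sequence 01;31;12;02;32 belongs to (LNS^♦)^□(G) but not to LNS^□(G); hence (LNS^♦)^□(G) ⊄ LNS^□(G). -/

import Mathlib

set_option maxHeartbeats 1000000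

structure GossipGraph (A : Type) : Type where
  N : A → A → Prop
  S : A → A → Prop
  refl_S : ∀ a, S a a
  S_sub_N : ∀ a b, S a b → N a b

namespace Gossip

variable {A : Type}

def Initial (G : GossipGraph A) : Prop := ∀ a b, G.S a b ↔ a = b

def doCall (G : GossipGraph A) (c : A × A) : GossipGraph A where
  N x y := G.N x y ∨ ((x = c.1 ∨ x = c.2) ∧ (G.N c.1 y ∨ G.N c.2 y))
  S x y := G.S x y ∨ ((x = c.1 ∨ x = c.2) ∧ (G.S c.1 y ∨ G.S c.2 y))
  refl_S a := Or.inl (G.refl_S a)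
  S_sub_N a b h := by
    rcases h with h | ⟨h1, h2 | h2⟩
    · exact Or.inl (G.S_sub_N a b h)
    · exact Or.inr ⟨h1, Or.inl (G.S_sub_N _ _ h2)⟩
    · exact Or.inr ⟨h1, Or.inr (G.S_sub_N _ _ h2)⟩

def doCalls (G : GossipGraph A) (σ : List (A × A)) : GossipGraph A :=
  σ.foldl doCall G

def PossibleSeq (G : GossipGraph A) : List (A × A) → Prop
  | [] => True
  | c :: σ => c.1 ≠ c.2 ∧ G.N c.1 c.2 ∧ PossibleSeq (doCall G c) σ

mutual
  inductive Form (A : Type) : Type where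
    | top : Form A
    | atomN : A → A → Form A
    | atomS : A → A → Form A
    | neg : Form A → Form A
    | conj : Form A → Form A → Form A
    | K : A → (A → A → Form A) → Form A → Form A
    | box : Prog A → Form A → Form A
  inductive Prog (A : Type) : Type where
    | test : Form A → Prog A
    | call : A → A → Prog A
    | seq : Prog A → Prog A → Prog A
    | cup : Prog A → Prog A → Prog A
    | star : Prog A → Prog A
end

abbrev Protocol (A : Type) := A → A → Form A

inductive Epi (G : GossipGraph A) (perm : List (A × A) → (A × A) → Prop) (a : A) :
    List (A × A) → List (A × A) → Prop where
  | refl : Epi G perm a [] []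
  | call_out {σ τ : List (A × A)} {b : A} :
      Epi G perm a σ τ →
      (∀ x, (doCalls G σ).N b x ↔ (doCalls G τ).N b x) →
      (∀ x, (doCalls G σ).S b x ↔ (doCalls G τ).S b x) →
      perm σ (a, b) → perm τ (a, b) →
      Epi G perm a (σ ++ [(a, b)]) (τ ++ [(a, b)])
  | call_in {σ τ : List (A × A)} {b : A} :
      Epi G perm a σ τ →
      (∀ x, (doCalls G σ).N b x ↔ (doCalls G τ).N b x) →
      (∀ x, (doCalls G σ).S b x ↔ (doCalls G τ).S b x) →
      perm σ (b, a) → perm τ (b, a) →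
      Epi G perm a (σ ++ [(b, a)]) (τ ++ [(b, a)])
  | other {σ τ : List (A × A)} {c d e f : A} :
      Epi G perm a σ τ →
      c ≠ a → d ≠ a → e ≠ a → f ≠ a →
      perm σ (c, d) → perm τ (e, f) →
      Epi G perm a (σ ++ [(c, d)]) (τ ++ [(e, f)])

mutual
  def Sat (G : GossipGraph A) : List (A × A) → Form A → Prop
    | _, Form.top => True
    | σ, Form.atomN a b => (doCalls G σ).N a b
    | σ, Form.atomS a b => (doCalls G σ).S a b
    | σ, Form.neg φ => ¬ Sat G σ φ
    | σ, Form.conj φ ψ => Sat G σ φ ∧ Sat G σ ψ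
    | σ, Form.K a P φ =>
        ∀ τ, Epi G (fun ρ c => c.1 ≠ c.2 ∧ (doCalls G ρ).N c.1 c.2 ∧ Sat G ρ (P c.1 c.2)) a τ σ →
          Sat G τ φ
    | σ, Form.box π φ => ∀ τ, ProgRel G π σ τ → Sat G τ φ
  def ProgRel (G : GossipGraph A) : Prog A → List (A × A) → List (A × A) → Prop
    | Prog.test φ, σ, τ => σ = τ ∧ Sat G σ φ
    | Prog.call a b, σ, τ => a ≠ b ∧ (doCalls G σ).N a b ∧ τ = σ ++ [(a, b)]
    | Prog.seq π π', σ, τ => ∃ ρ, ProgRel G π σ ρ ∧ ProgRel G π' ρ τ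
    | Prog.cup π π', σ, τ => ProgRel G π σ τ ∨ ProgRel G π' σ τ
    | Prog.star π, σ, τ => Relation.ReflTransGen (fun x y => ProgRel G π x y) σ τ
end


/-- A call `ab` is `P`-permitted at `(G, σ)` iff `a ≠ b`, `N^σ a b` and `G,σ ⊨ P_{ab}`. -/
def Permits (G : GossipGraph A) (P : Protocol A) (σ : List (A × A)) (c : A × A) : Prop :=
  c.1 ≠ c.2 ∧ (doCalls G σ).N c.1 c.2 ∧ Sat G σ (P c.1 c.2)

/-- The least set of call sequences containing `ε` and closed under adding permitted calls. -/
inductive Ext (G : GossipGraph A) (perm : List (A × A) → (A × A) → Prop) : List (A × A) → Prop where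
  | nil : Ext G perm []
  | snoc {σ : List (A × A)} {c : A × A} : Ext G perm σ → perm σ c → Ext G perm (σ ++ [c])

/-- The extension of a syntactic protocol `P` on an (initial) gossip graph `G`. -/
def extension (P : Protocol A) (G : GossipGraph A) : Set (List (A × A)) :=
  { σ | Ext G (Permits G P) σ }

/-- A formula is valid iff it is true at every gossip state, i.e. at every pair of an
initial gossip graph and a call sequence possible on it. -/
def Valid (φ : Form A) : Prop :=
  ∀ G : GossipGraph A, Initial G → ∀ σ : List (A × A), PossibleSeq G σ → Sat G σ φ

def impF (φ ψ : Form A) : Form A := Form.neg (Form.conj φ (Form.neg ψ))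
def orF (φ ψ : Form A) : Form A := Form.neg (Form.conj (Form.neg φ) (Form.neg ψ))
def iffF (φ ψ : Form A) : Form A := Form.conj (impF φ ψ) (impF ψ φ)
/-- The epistemic "possibility" dual `K̂ := ¬K¬`. -/
def hatK (a : A) (P : Protocol A) (φ : Form A) : Form A := Form.neg (Form.K a P (Form.neg φ))

/-- A semantic protocol, as raw data: a map from (initial) gossip graphs to sets of call
sequences. -/
abbrev RawSem (A : Type) := GossipGraph A → Set (List (A × A))

/-- For a semantic protocol, a call `c` is permitted at `(G,σ)` iff `σ;c ∈ P(G)`. -/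
def semPerm (Q : RawSem A) (G : GossipGraph A) (σ : List (A × A)) (c : A × A) : Prop :=
  σ ++ [c] ∈ Q G

/-- `σ` is terminal (in `Q(G)`) iff no further call is permitted. -/
def TerminalIn (Q : RawSem A) (G : GossipGraph A) (σ : List (A × A)) : Prop :=
  ∀ c : A × A, σ ++ [c] ∉ Q G

/-- All agents are experts: everyone knows all secrets. -/
def AllExpert (G : GossipGraph A) : Prop := ∀ a b : A, G.S a b

/-- A semantic protocol: assigns to each initial gossip graph a set of call sequences
possible on it, containing the empty sequence and closed under prefixes. -/
structure SemProtocol (A : Type) : Type where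
  ext : GossipGraph A → Set (List (A × A))
  nil_mem : ∀ G : GossipGraph A, Initial G → [] ∈ ext G
  prefix_closed : ∀ G : GossipGraph A, Initial G → ∀ σ c, σ ++ [c] ∈ ext G → σ ∈ ext G
  possible : ∀ G : GossipGraph A, Initial G → ∀ σ ∈ ext G, PossibleSeq G σ

/-- A semantic protocol is epistemic iff a call `ab` is permitted at `(G,σ)` exactly when it
is permitted at all states that agent `a` cannot distinguish from `(G,σ)`. -/
def SemEpistemic (Q : RawSem A) : Prop :=
  ∀ G : GossipGraph A, Initial G → ∀ σ ∈ Q G, ∀ a b : A, a ≠ b →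
    (σ ++ [(a, b)] ∈ Q G ↔ ∀ τ, Epi G (semPerm Q G) a τ σ → τ ++ [(a, b)] ∈ Q G)

/-- Relabelling the agents of a gossip graph along a permutation. -/
def mapGraph (J : Equiv.Perm A) (G : GossipGraph A) : GossipGraph A where
  N x y := G.N (J.symm x) (J.symm y)
  S x y := G.S (J.symm x) (J.symm y)
  refl_S a := G.refl_S _
  S_sub_N a b h := G.S_sub_N _ _ h

/-- Relabelling a call sequence, callwise. -/
def mapSeq (J : Equiv.Perm A) (σ : List (A × A)) : List (A × A) :=
  σ.map (fun c => (J c.1, J c.2))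

mutual
  /-- Relabelling the agents in a formula along a permutation. -/
  def mapForm (J : Equiv.Perm A) : Form A → Form A
    | Form.top => Form.top
    | Form.atomN a b => Form.atomN (J a) (J b)
    | Form.atomS a b => Form.atomS (J a) (J b)
    | Form.neg φ => Form.neg (mapForm J φ)
    | Form.conj φ ψ => Form.conj (mapForm J φ) (mapForm J ψ)
    | Form.K a P φ => Form.K (J a) (fun x y => mapForm J (P (J.symm x) (J.symm y))) (mapForm J φ)
    | Form.box π φ => Form.box (mapProg J π) (mapForm J φ)
  /-- Relabelling the agents in a program along a permutation. -/
  def mapProg (J : Equiv.Perm A) : Prog A → Prog A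
    | Prog.test φ => Prog.test (mapForm J φ)
    | Prog.call a b => Prog.call (J a) (J b)
    | Prog.seq π π' => Prog.seq (mapProg J π) (mapProg J π')
    | Prog.cup π π' => Prog.cup (mapProg J π) (mapProg J π')
    | Prog.star π => Prog.star (mapProg J π)
end

/-- A semantic protocol is symmetric iff it commutes with relabelling of the agents. -/
def SemSymmetric (Q : RawSem A) : Prop :=
  ∀ (J : Equiv.Perm A) (G : GossipGraph A), Initial G →
    Q (mapGraph J G) = mapSeq J '' Q G

def listConj (l : List (Form A)) : Form A := l.foldr Form.conj Form.top
def listDisj (l : List (Form A)) : Form A := l.foldr orF (Form.neg Form.top)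

noncomputable def pairsList (A : Type) [Fintype A] : List (A × A) := (Finset.univ : Finset (A × A)).toList
noncomputable def distinctPairs (A : Type) [Fintype A] [DecidableEq A] : List (A × A) :=
  (pairsList A).filter (fun c => decide (c.1 ≠ c.2))

/-- The formula `Ex`: all agents are experts. -/
noncomputable def ExForm (A : Type) [Fintype A] : Form A :=
  listConj ((pairsList A).map (fun c => Form.atomS c.1 c.2))

/-- `Ex ∨ ⋁_{i≠j} (N_ij ∧ P_ij)`. -/
noncomputable def oneStepBody (A : Type) [Fintype A] [DecidableEq A] (P : Protocol A) : Form A :=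
  orF (ExForm A) (listDisj ((distinctPairs A).map (fun c => Form.conj (Form.atomN c.1 c.2) (P c.1 c.2))))

/-- Hard one-step strengthening: `P_ab ∧ K_a^P [ab](Ex ∨ ⋁_{i≠j}(N_ij ∧ P_ij))`. -/
noncomputable def hardOneStep {A : Type} [Fintype A] [DecidableEq A] (P : Protocol A) : Protocol A :=
  fun a b => Form.conj (P a b) (Form.K a P (Form.box (Prog.call a b) (oneStepBody A P)))

/-- Soft one-step strengthening: `P_ab ∧ K̂_a^P [ab](Ex ∨ ⋁_{i≠j}(N_ij ∧ P_ij))`. -/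
noncomputable def softOneStep {A : Type} [Fintype A] [DecidableEq A] (P : Protocol A) : Protocol A :=
  fun a b => Form.conj (P a b) (hatK a P (Form.box (Prog.call a b) (oneStepBody A P)))

/-- The protocol `P` as a program:
`(⋃_{a≠b} ?(N_ab ∧ P_ab);ab)* ; ?⋀_{a≠b} ¬(N_ab ∧ P_ab)`. -/
noncomputable def protProg (A : Type) [Fintype A] [DecidableEq A] (P : Protocol A) : Prog A :=
  Prog.seq
    (Prog.star (((distinctPairs A).map (fun c =>
      Prog.seq (Prog.test (Form.conj (Form.atomN c.1 c.2) (P c.1 c.2))) (Prog.call c.1 c.2))).foldr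
        Prog.cup (Prog.test (Form.neg Form.top))))
    (Prog.test (listConj ((distinctPairs A).map (fun c =>
      Form.neg (Form.conj (Form.atomN c.1 c.2) (P c.1 c.2))))))

/-- Hard look-ahead strengthening: `P_ab ∧ K_a^P [ab]⟨P⟩Ex`. -/
noncomputable def hardLookAhead {A : Type} [Fintype A] [DecidableEq A] (P : Protocol A) : Protocol A :=
  fun a b => Form.conj (P a b)
    (Form.K a P (Form.box (Prog.call a b)
      (Form.neg (Form.box (protProg A P) (Form.neg (ExForm A))))))

/-- Soft look-ahead strengthening: `P_ab ∧ K̂_a^P [ab]⟨P⟩Ex`. -/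
noncomputable def softLookAhead {A : Type} [Fintype A] [DecidableEq A] (P : Protocol A) : Protocol A :=
  fun a b => Form.conj (P a b)
    (hatK a P (Form.box (Prog.call a b)
      (Form.neg (Form.box (protProg A P) (Form.neg (ExForm A))))))

/-- Hard uniform backward defoliation of a semantic protocol. -/
def HUBD (Q : RawSem A) : RawSem A := fun G =>
  { σ | σ ∈ Q G ∧ (σ = [] ∨ ∃ τ : List (A × A), ∃ a b : A, σ = τ ++ [(a, b)] ∧
      ∀ τ', Epi G (semPerm Q G) a τ' τ →
        (τ' ++ [(a, b)] ∈ Q G ∧ TerminalIn Q G (τ' ++ [(a, b)])) →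
          AllExpert (doCalls G (τ' ++ [(a, b)]))) }

/-- Soft uniform backward defoliation of a semantic protocol. -/
def SUBD (Q : RawSem A) : RawSem A := fun G =>
  { σ | σ ∈ Q G ∧ (σ = [] ∨ ∃ τ : List (A × A), ∃ a b : A, σ = τ ++ [(a, b)] ∧
      ∃ τ', Epi G (semPerm Q G) a τ' τ ∧
        ((τ' ++ [(a, b)] ∈ Q G ∧ TerminalIn Q G (τ' ++ [(a, b)])) →
          AllExpert (doCalls G (τ' ++ [(a, b)])))) }

/-- The syntactic protocol LNS: `LNS_ab := ¬ S_ab`. -/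
def LNSsyn (A : Type) : Protocol A := fun a b => Form.neg (Form.atomS a b)

/-- LNS-permitted: call `ab` permitted at `(G,σ)` iff `N^σ a b` and not `S^σ a b`. -/
def LNSperm (G : GossipGraph A) (σ : List (A × A)) (c : A × A) : Prop :=
  c.1 ≠ c.2 ∧ (doCalls G σ).N c.1 c.2 ∧ ¬ (doCalls G σ).S c.1 c.2

/-- LNS as a semantic protocol. -/
def LNSsem : RawSem A := fun G => { σ | Ext G (LNSperm G) σ }

/-- A semantic protocol is strongly successful on `G` iff every terminal sequence makes
all agents experts. -/
def StronglySuccessfulOn (Q : RawSem A) (G : GossipGraph A) : Prop :=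
  ∀ σ ∈ Q G, TerminalIn Q G σ → AllExpert (doCalls G σ)

/-- A semantic protocol is weakly successful on `G` iff some terminal sequence makes
all agents experts. -/
def WeaklySuccessfulOn (Q : RawSem A) (G : GossipGraph A) : Prop :=
  ∃ σ ∈ Q G, TerminalIn Q G σ ∧ AllExpert (doCalls G σ)


/-- The "spaceship" initial gossip graph on agents 0,1,2,3:
`N` is the reflexive closure of {(0,1),(3,1),(1,2)} and `S` is the identity. -/
def spaceship : GossipGraph (Fin 4) where
  N x y := x = y ∨ (x = 0 ∧ y = 1) ∨ (x = 3 ∧ y = 1) ∨ (x = 1 ∧ y = 2)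
  S x y := x = y
  refl_S a := rfl
  S_sub_N a b h := Or.inl h


/-! ### Auxiliary development -/

section Decidability

def decCallsN [DecidableEq A] : (σ : List (A × A)) → (G : GossipGraph A) →
    (∀ a b, Decidable (G.N a b)) → ∀ a b, Decidable ((doCalls G σ).N a b)
  | [], _, d => d
  | c :: σ, G, d =>
      decCallsN σ (doCall G c) (fun a b =>
        @decidable_of_iff _ _ Iff.rfl
          (@instDecidableOr _ _ (d a b) (@instDecidableAnd _ _
            (@instDecidableOr _ _ (decEq a c.1) (decEq a c.2))
            (@instDecidableOr _ _ (d c.1 b) (d c.2 b)))))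

def decCallsS [DecidableEq A] : (σ : List (A × A)) → (G : GossipGraph A) →
    (∀ a b, Decidable (G.S a b)) → ∀ a b, Decidable ((doCalls G σ).S a b)
  | [], _, d => d
  | c :: σ, G, d =>
      decCallsS σ (doCall G c) (fun a b =>
        @decidable_of_iff _ _ Iff.rfl
          (@instDecidableOr _ _ (d a b) (@instDecidableAnd _ _
            (@instDecidableOr _ _ (decEq a c.1) (decEq a c.2))
            (@instDecidableOr _ _ (d c.1 b) (d c.2 b)))))

instance decSpaceN (a b : Fin 4) : Decidable (spaceship.N a b) :=
  decidable_of_iff (a = b ∨ (a = 0 ∧ b = 1) ∨ (a = 3 ∧ b = 1) ∨ (a = 1 ∧ b = 2)) Iff.rfl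

instance decSpaceS (a b : Fin 4) : Decidable (spaceship.S a b) :=
  decidable_of_iff (a = b) Iff.rfl

instance instDecDoCallsN (σ : List (Fin 4 × Fin 4)) (a b : Fin 4) :
    Decidable ((doCalls spaceship σ).N a b) := decCallsN σ spaceship decSpaceN a b

instance instDecDoCallsS (σ : List (Fin 4 × Fin 4)) (a b : Fin 4) :
    Decidable ((doCalls spaceship σ).S a b) := decCallsS σ spaceship decSpaceS a b

instance decAllExpert (σ : List (Fin 4 × Fin 4)) :
    Decidable (AllExpert (doCalls spaceship σ)) :=
  decidable_of_iff (∀ a b, (doCalls spaceship σ).S a b) Iff.rfl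

lemma permits_def {G : GossipGraph A} {P : Protocol A} {σ : List (A × A)} {c : A × A} :
    Permits G P σ c ↔
      (c.1 ≠ c.2 ∧ (doCalls G σ).N c.1 c.2 ∧ Sat G σ (P c.1 c.2)) := Iff.rfl

lemma permits_LNS_iff {G : GossipGraph A} {σ : List (A × A)} {c : A × A} :
    Permits G (LNSsyn A) σ c ↔
      (c.1 ≠ c.2 ∧ (doCalls G σ).N c.1 c.2 ∧ ¬ (doCalls G σ).S c.1 c.2) := Iff.rfl

instance decPermLNS (σ : List (Fin 4 × Fin 4)) (c : Fin 4 × Fin 4) :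
    Decidable (Permits spaceship (LNSsyn (Fin 4)) σ c) :=
  decidable_of_iff _ permits_LNS_iff.symm

end Decidability

section SatLemmas

variable {G : GossipGraph A} {σ τ : List (A × A)}

lemma sat_top : Sat G σ Form.top ↔ True := Iff.rfl
lemma sat_atomN {a b : A} : Sat G σ (Form.atomN a b) ↔ (doCalls G σ).N a b := Iff.rfl
lemma sat_atomS {a b : A} : Sat G σ (Form.atomS a b) ↔ (doCalls G σ).S a b := Iff.rfl
lemma sat_neg {φ : Form A} : Sat G σ (Form.neg φ) ↔ ¬ Sat G σ φ := Iff.rfl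
lemma sat_conj {φ ψ : Form A} : Sat G σ (Form.conj φ ψ) ↔ Sat G σ φ ∧ Sat G σ ψ := Iff.rfl
lemma sat_K {a : A} {P : Protocol A} {φ : Form A} :
    Sat G σ (Form.K a P φ) ↔ ∀ τ, Epi G (Permits G P) a τ σ → Sat G τ φ := Iff.rfl
lemma sat_box {π : Prog A} {φ : Form A} :
    Sat G σ (Form.box π φ) ↔ ∀ τ, ProgRel G π σ τ → Sat G τ φ := Iff.rfl
lemma sat_LNS {a b : A} : Sat G σ (LNSsyn A a b) ↔ ¬ (doCalls G σ).S a b := Iff.rfl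

lemma progRel_test {φ : Form A} : ProgRel G (Prog.test φ) σ τ ↔ (σ = τ ∧ Sat G σ φ) := Iff.rfl
lemma progRel_call {a b : A} :
    ProgRel G (Prog.call a b) σ τ ↔ (a ≠ b ∧ (doCalls G σ).N a b ∧ τ = σ ++ [(a, b)]) := Iff.rfl
lemma progRel_seq {π π' : Prog A} :
    ProgRel G (Prog.seq π π') σ τ ↔ ∃ ρ, ProgRel G π σ ρ ∧ ProgRel G π' ρ τ := Iff.rfl
lemma progRel_cup {π π' : Prog A} :
    ProgRel G (Prog.cup π π') σ τ ↔ (ProgRel G π σ τ ∨ ProgRel G π' σ τ) := Iff.rfl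
lemma progRel_star {π : Prog A} :
    ProgRel G (Prog.star π) σ τ ↔
      Relation.ReflTransGen (fun x y => ProgRel G π x y) σ τ := Iff.rfl

lemma sat_orF {φ ψ : Form A} : Sat G σ (orF φ ψ) ↔ Sat G σ φ ∨ Sat G σ ψ := by
  show ¬(¬ Sat G σ φ ∧ ¬ Sat G σ ψ) ↔ _
  tauto

lemma sat_listConj {l : List (Form A)} :
    Sat G σ (listConj l) ↔ ∀ φ ∈ l, Sat G σ φ := by
  induction l with
  | nil => exact ⟨fun _ φ hφ => by simp at hφ, fun _ => sat_top.mpr trivial⟩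
  | cons φ l ih =>
      show Sat G σ (Form.conj φ (listConj l)) ↔ _
      rw [sat_conj, ih]; simp

lemma sat_listDisj {l : List (Form A)} :
    Sat G σ (listDisj l) ↔ ∃ φ ∈ l, Sat G σ φ := by
  induction l with
  | nil =>
      show Sat G σ (Form.neg Form.top) ↔ _
      simp [sat_neg, sat_top]
  | cons φ l ih =>
      show Sat G σ (orF φ (listDisj l)) ↔ _
      rw [sat_orF, ih]; simp

lemma mem_pairsList [Fintype A] (c : A × A) : c ∈ pairsList A :=
  Finset.mem_toList.mpr (Finset.mem_univ c)

lemma mem_distinctPairs [Fintype A] [DecidableEq A] {c : A × A} :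
    c ∈ distinctPairs A ↔ c.1 ≠ c.2 := by
  simp [distinctPairs, List.mem_filter, mem_pairsList]

lemma sat_ExForm [Fintype A] : Sat G σ (ExForm A) ↔ AllExpert (doCalls G σ) := by
  rw [ExForm, sat_listConj]
  constructor
  · intro h a b
    exact sat_atomS.mp (h _ (List.mem_map.mpr ⟨(a, b), mem_pairsList _, rfl⟩))
  · rintro h φ hφ
    obtain ⟨c, _, rfl⟩ := List.mem_map.mp hφ
    exact sat_atomS.mpr (h c.1 c.2)

lemma sat_oneStepBody [Fintype A] [DecidableEq A] {P : Protocol A} :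
    Sat G σ (oneStepBody A P) ↔
      AllExpert (doCalls G σ) ∨ ∃ c : A × A, Permits G P σ c := by
  rw [oneStepBody, sat_orF, sat_ExForm, sat_listDisj]
  apply or_congr Iff.rfl
  constructor
  · rintro ⟨φ, hφ, hsat⟩
    obtain ⟨c, hc, rfl⟩ := List.mem_map.mp hφ
    exact ⟨c, permits_def.mpr ⟨mem_distinctPairs.mp hc,
      (sat_conj.mp hsat).1, (sat_conj.mp hsat).2⟩⟩
  · rintro ⟨c, hc⟩
    obtain ⟨h1, h2, h3⟩ := permits_def.mp hc
    exact ⟨_, List.mem_map.mpr ⟨c, mem_distinctPairs.mpr h1, rfl⟩, sat_conj.mpr ⟨h2, h3⟩⟩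

lemma sat_hatK {a : A} {P : Protocol A} {φ : Form A} :
    Sat G σ (hatK a P φ) ↔ ∃ τ, Epi G (Permits G P) a τ σ ∧ Sat G τ φ := by
  show ¬ (∀ τ, Epi G (Permits G P) a τ σ → ¬ Sat G τ φ) ↔ _
  constructor
  · intro h
    by_contra hc
    push_neg at hc
    exact h fun τ hE hS => hc τ hE hS
  · rintro ⟨τ, hE, hS⟩ h
    exact h τ hE hS

/-- One protocol step as a relation on call sequences. -/
abbrev stepRel (G : GossipGraph A) (P : Protocol A) (x y : List (A × A)) : Prop :=
  ∃ c : A × A, Permits G P x c ∧ y = x ++ [c]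

lemma rtg_congr {α : Type*} {r s : α → α → Prop} (h : ∀ x y, r x y ↔ s x y) {x y : α} :
    Relation.ReflTransGen r x y ↔ Relation.ReflTransGen s x y :=
  ⟨Relation.ReflTransGen.mono (fun a b hh => (h a b).mp hh) x y,
   Relation.ReflTransGen.mono (fun a b hh => (h a b).mpr hh) x y⟩

lemma progRel_foldr_cup {l : List (Prog A)} {p0 : Prog A} :
    ProgRel G (l.foldr Prog.cup p0) σ τ ↔
      (∃ q ∈ l, ProgRel G q σ τ) ∨ ProgRel G p0 σ τ := by
  induction l with
  | nil => simp
  | cons q l ih =>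
      show ProgRel G (Prog.cup q (l.foldr Prog.cup p0)) σ τ ↔ _
      rw [progRel_cup, ih]
      simp [or_assoc]

lemma inner_rel [Fintype A] [DecidableEq A] {P : Protocol A} {x y : List (A × A)} :
    ProgRel G (((distinctPairs A).map (fun c =>
      Prog.seq (Prog.test (Form.conj (Form.atomN c.1 c.2) (P c.1 c.2))) (Prog.call c.1 c.2))).foldr
        Prog.cup (Prog.test (Form.neg Form.top))) x y ↔ stepRel G P x y := by
  rw [progRel_foldr_cup]
  constructor
  · rintro (⟨q, hq, hrel⟩ | htest)
    · obtain ⟨c, hc, rfl⟩ := List.mem_map.mp hq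
      obtain ⟨ρ, ht, hc2⟩ := progRel_seq.mp hrel
      obtain ⟨he, hs⟩ := progRel_test.mp ht
      subst he
      obtain ⟨hne, hN2, rfl⟩ := progRel_call.mp hc2
      exact ⟨c, permits_def.mpr ⟨hne, hN2, (sat_conj.mp hs).2⟩, rfl⟩
    · exact absurd (sat_neg.mp (progRel_test.mp htest).2) (by simp [sat_top])
  · rintro ⟨c, hperm, rfl⟩
    obtain ⟨h1, h2, h3⟩ := permits_def.mp hperm
    exact Or.inl ⟨_, List.mem_map.mpr ⟨c, mem_distinctPairs.mpr h1, rfl⟩,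
      progRel_seq.mpr ⟨x, progRel_test.mpr ⟨rfl, sat_conj.mpr ⟨h2, h3⟩⟩,
        progRel_call.mpr ⟨h1, h2, rfl⟩⟩⟩

lemma sat_final [Fintype A] [DecidableEq A] {P : Protocol A} :
    Sat G σ (listConj ((distinctPairs A).map (fun c =>
      Form.neg (Form.conj (Form.atomN c.1 c.2) (P c.1 c.2))))) ↔
      ∀ c : A × A, ¬ Permits G P σ c := by
  rw [sat_listConj]
  constructor
  · intro h c hc
    obtain ⟨h1, h2, h3⟩ := permits_def.mp hc
    exact sat_neg.mp (h _ (List.mem_map.mpr ⟨c, mem_distinctPairs.mpr h1, rfl⟩))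
      (sat_conj.mpr ⟨h2, h3⟩)
  · rintro h φ hφ
    obtain ⟨c, hc, rfl⟩ := List.mem_map.mp hφ
    refine sat_neg.mpr fun hs => h c ?_
    exact permits_def.mpr ⟨mem_distinctPairs.mp hc, (sat_conj.mp hs).1, (sat_conj.mp hs).2⟩

lemma progRel_protProg [Fintype A] [DecidableEq A] {P : Protocol A} :
    ProgRel G (protProg A P) σ τ ↔
      (Relation.ReflTransGen (stepRel G P) σ τ ∧ ∀ c : A × A, ¬ Permits G P τ c) := by
  unfold protProg
  rw [progRel_seq]
  constructor
  · rintro ⟨ρ, h1, h2⟩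
    obtain ⟨heq, hfin⟩ := progRel_test.mp h2
    subst heq
    exact ⟨(rtg_congr (fun x y => inner_rel)).mp (progRel_star.mp h1), sat_final.mp hfin⟩
  · rintro ⟨h1, h2⟩
    exact ⟨τ, progRel_star.mpr ((rtg_congr (fun x y => inner_rel)).mpr h1),
      progRel_test.mpr ⟨rfl, sat_final.mpr h2⟩⟩

lemma sat_diamondEx [Fintype A] [DecidableEq A] {P : Protocol A} :
    Sat G σ (Form.neg (Form.box (protProg A P) (Form.neg (ExForm A)))) ↔
      ∃ τ, (Relation.ReflTransGen (stepRel G P) σ τ ∧ ∀ c : A × A, ¬ Permits G P τ c) ∧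
        AllExpert (doCalls G τ) := by
  constructor
  · intro h
    have h' : ¬ ∀ τ, ProgRel G (protProg A P) σ τ → ¬ Sat G τ (ExForm A) := h
    obtain ⟨τ, hτ⟩ := not_forall.mp h'
    obtain ⟨h1, h2⟩ := _root_.not_imp.mp hτ
    exact ⟨τ, progRel_protProg.mp h1, sat_ExForm.mp (not_not.mp h2)⟩
  · rintro ⟨τ, hrel, hEx⟩
    show ¬ ∀ τ', ProgRel G (protProg A P) σ τ' → ¬ Sat G τ' (ExForm A)
    intro hall
    exact hall τ (progRel_protProg.mpr hrel) (sat_ExForm.mpr hEx)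

end SatLemmas

section EpiLemmas

variable {G : GossipGraph A}

lemma epi_nil {p : List (A × A) → (A × A) → Prop} {a : A} {τ l : List (A × A)}
    (h : Epi G p a τ l) (hl : l = []) : τ = [] := by
  cases h with
  | refl => rfl
  | call_out h1 h2 h3 h4 h5 => exact absurd hl (by simp)
  | call_in h1 h2 h3 h4 h5 => exact absurd hl (by simp)
  | other h1 h2 h3 h4 h5 h6 h7 => exact absurd hl (by simp)

lemma epi_snoc_inv {p : List (A × A) → (A × A) → Prop} {a : A} {τ l σ0 : List (A × A)}
    {z : A × A} (h : Epi G p a τ l) (hl : l = σ0 ++ [z]) :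
    ∃ τ0 d, τ = τ0 ++ [d] ∧ Epi G p a τ0 σ0 ∧ p τ0 d ∧ p σ0 z ∧
      ((d = z ∧ z.1 = a ∧ (∀ x, (doCalls G τ0).N z.2 x ↔ (doCalls G σ0).N z.2 x)
                       ∧ (∀ x, (doCalls G τ0).S z.2 x ↔ (doCalls G σ0).S z.2 x)) ∨
       (d = z ∧ z.2 = a ∧ (∀ x, (doCalls G τ0).N z.1 x ↔ (doCalls G σ0).N z.1 x)
                       ∧ (∀ x, (doCalls G τ0).S z.1 x ↔ (doCalls G σ0).S z.1 x)) ∨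
       (z.1 ≠ a ∧ z.2 ≠ a ∧ d.1 ≠ a ∧ d.2 ≠ a)) := by
  cases h with
  | refl => exact absurd hl.symm (by simp)
  | @call_out σc τc b hE hN hS hp1 hp2 =>
      obtain ⟨h1, h2⟩ := List.append_inj' hl rfl
      injection h2 with h2 _
      subst h1; subst h2
      exact ⟨σc, (a, b), rfl, hE, hp1, hp2, Or.inl ⟨rfl, rfl, hN, hS⟩⟩
  | @call_in σc τc b hE hN hS hp1 hp2 =>
      obtain ⟨h1, h2⟩ := List.append_inj' hl rfl
      injection h2 with h2 _
      subst h1; subst h2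
      exact ⟨σc, (b, a), rfl, hE, hp1, hp2, Or.inr (Or.inl ⟨rfl, rfl, hN, hS⟩)⟩
  | @other σc τc c d e f hE hc hd he hf hp1 hp2 =>
      obtain ⟨h1, h2⟩ := List.append_inj' hl rfl
      injection h2 with h2 _
      subst h1; subst h2
      exact ⟨σc, (c, d), rfl, hE, hp1, hp2, Or.inr (Or.inr ⟨he, hf, hc, hd⟩)⟩

lemma ext_snoc_inv {p : List (A × A) → (A × A) → Prop} {l σ0 : List (A × A)} {z : A × A}
    (h : Ext G p l) (hl : l = σ0 ++ [z]) : Ext G p σ0 ∧ p σ0 z := by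
  cases h with
  | nil => exact absurd hl.symm (by simp)
  | @snoc σc c h1 h2 =>
      obtain ⟨e1, e2⟩ := List.append_inj' hl rfl
      injection e2 with e2 _
      subst e1; subst e2
      exact ⟨h1, h2⟩

lemma epi_of_ext {p : List (A × A) → (A × A) → Prop} {σ : List (A × A)} (a : A)
    (h : Ext G p σ) : Epi G p a σ σ := by
  induction h with
  | nil => exact Epi.refl
  | @snoc σc c hσ hp ih =>
      obtain ⟨c1, c2⟩ := c
      by_cases h1 : c1 = a
      · subst h1
        exact Epi.call_out ih (fun _ => Iff.rfl) (fun _ => Iff.rfl) hp hp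
      · by_cases h2 : c2 = a
        · subst h2
          exact Epi.call_in ih (fun _ => Iff.rfl) (fun _ => Iff.rfl) hp hp
        · exact Epi.other ih h1 h2 h1 h2 hp hp

end EpiLemmas

section Concrete

/-! #### No successful LNS continuations from certain positions -/

lemma noSucc1 : ∀ τ, Relation.ReflTransGen (stepRel spaceship (LNSsyn (Fin 4)))
    [((1 : Fin 4), (2 : Fin 4))] τ → ¬ AllExpert (doCalls spaceship τ) := by
  have key : ∀ τ, Relation.ReflTransGen (stepRel spaceship (LNSsyn (Fin 4)))
      [((1 : Fin 4), (2 : Fin 4))] τ →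
      (τ = [(1,2)] ∨ τ = [(1,2),(0,1)] ∨ τ = [(1,2),(3,1)] ∨
       τ = [(1,2),(0,1),(3,1)] ∨ τ = [(1,2),(3,1),(0,1)]) := by
    intro τ h
    induction h with
    | refl => exact Or.inl rfl
    | tail hab hbc ih =>
      obtain ⟨c, hperm, rfl⟩ := hbc
      rcases ih with rfl | rfl | rfl | rfl | rfl
      · rcases (by decide : ∀ c : Fin 4 × Fin 4,
            Permits spaceship (LNSsyn (Fin 4)) [((1:Fin 4),(2:Fin 4))] c →
            c = (0,1) ∨ c = (3,1)) c hperm with rfl | rfl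
        · exact Or.inr (Or.inl rfl)
        · exact Or.inr (Or.inr (Or.inl rfl))
      · obtain rfl := (by decide : ∀ c : Fin 4 × Fin 4,
            Permits spaceship (LNSsyn (Fin 4)) [((1:Fin 4),(2:Fin 4)),(0,1)] c →
            c = (3,1)) c hperm
        exact Or.inr (Or.inr (Or.inr (Or.inl rfl)))
      · obtain rfl := (by decide : ∀ c : Fin 4 × Fin 4,
            Permits spaceship (LNSsyn (Fin 4)) [((1:Fin 4),(2:Fin 4)),(3,1)] c →
            c = (0,1)) c hperm
        exact Or.inr (Or.inr (Or.inr (Or.inr rfl)))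
      · exact absurd hperm ((by decide : ∀ c : Fin 4 × Fin 4,
          ¬ Permits spaceship (LNSsyn (Fin 4)) [((1:Fin 4),(2:Fin 4)),(0,1),(3,1)] c) c)
      · exact absurd hperm ((by decide : ∀ c : Fin 4 × Fin 4,
          ¬ Permits spaceship (LNSsyn (Fin 4)) [((1:Fin 4),(2:Fin 4)),(3,1),(0,1)] c) c)
  intro τ h hEx
  rcases key τ h with rfl | rfl | rfl | rfl | rfl <;> revert hEx <;> decide

lemma noSucc2 : ∀ τ, Relation.ReflTransGen (stepRel spaceship (LNSsyn (Fin 4)))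
    [((0 : Fin 4), (1 : Fin 4)), (1, 2)] τ → ¬ AllExpert (doCalls spaceship τ) := by
  have key : ∀ τ, Relation.ReflTransGen (stepRel spaceship (LNSsyn (Fin 4)))
      [((0 : Fin 4), (1 : Fin 4)), (1, 2)] τ →
      (τ = [(0,1),(1,2)] ∨ τ = [(0,1),(1,2),(0,2)] ∨ τ = [(0,1),(1,2),(3,1)] ∨
       τ = [(0,1),(1,2),(0,2),(3,1)] ∨ τ = [(0,1),(1,2),(3,1),(0,2)]) := by
    intro τ h
    induction h with
    | refl => exact Or.inl rfl
    | tail hab hbc ih =>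
      obtain ⟨c, hperm, rfl⟩ := hbc
      rcases ih with rfl | rfl | rfl | rfl | rfl
      · rcases (by decide : ∀ c : Fin 4 × Fin 4,
            Permits spaceship (LNSsyn (Fin 4)) [((0:Fin 4),(1:Fin 4)),(1,2)] c →
            c = (0,2) ∨ c = (3,1)) c hperm with rfl | rfl
        · exact Or.inr (Or.inl rfl)
        · exact Or.inr (Or.inr (Or.inl rfl))
      · obtain rfl := (by decide : ∀ c : Fin 4 × Fin 4,
            Permits spaceship (LNSsyn (Fin 4)) [((0:Fin 4),(1:Fin 4)),(1,2),(0,2)] c →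
            c = (3,1)) c hperm
        exact Or.inr (Or.inr (Or.inr (Or.inl rfl)))
      · obtain rfl := (by decide : ∀ c : Fin 4 × Fin 4,
            Permits spaceship (LNSsyn (Fin 4)) [((0:Fin 4),(1:Fin 4)),(1,2),(3,1)] c →
            c = (0,2)) c hperm
        exact Or.inr (Or.inr (Or.inr (Or.inr rfl)))
      · exact absurd hperm ((by decide : ∀ c : Fin 4 × Fin 4,
          ¬ Permits spaceship (LNSsyn (Fin 4)) [((0:Fin 4),(1:Fin 4)),(1,2),(0,2),(3,1)] c) c)
      · exact absurd hperm ((by decide : ∀ c : Fin 4 × Fin 4,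
          ¬ Permits spaceship (LNSsyn (Fin 4)) [((0:Fin 4),(1:Fin 4)),(1,2),(3,1),(0,2)] c) c)
  intro τ h hEx
  rcases key τ h with rfl | rfl | rfl | rfl | rfl <;> revert hEx <;> decide

lemma noSucc3 : ∀ τ, Relation.ReflTransGen (stepRel spaceship (LNSsyn (Fin 4)))
    [((0 : Fin 4), (1 : Fin 4)), (3, 1), (0, 2)] τ → ¬ AllExpert (doCalls spaceship τ) := by
  have key : ∀ τ, Relation.ReflTransGen (stepRel spaceship (LNSsyn (Fin 4)))
      [((0 : Fin 4), (1 : Fin 4)), (3, 1), (0, 2)] τ →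
      (τ = [(0,1),(3,1),(0,2)] ∨ τ = [(0,1),(3,1),(0,2),(1,2)] ∨
       τ = [(0,1),(3,1),(0,2),(3,2)] ∨ τ = [(0,1),(3,1),(0,2),(1,2),(3,2)] ∨
       τ = [(0,1),(3,1),(0,2),(3,2),(1,2)]) := by
    intro τ h
    induction h with
    | refl => exact Or.inl rfl
    | tail hab hbc ih =>
      obtain ⟨c, hperm, rfl⟩ := hbc
      rcases ih with rfl | rfl | rfl | rfl | rfl
      · rcases (by decide : ∀ c : Fin 4 × Fin 4,
            Permits spaceship (LNSsyn (Fin 4)) [((0:Fin 4),(1:Fin 4)),(3,1),(0,2)] c →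
            c = (1,2) ∨ c = (3,2)) c hperm with rfl | rfl
        · exact Or.inr (Or.inl rfl)
        · exact Or.inr (Or.inr (Or.inl rfl))
      · obtain rfl := (by decide : ∀ c : Fin 4 × Fin 4,
            Permits spaceship (LNSsyn (Fin 4)) [((0:Fin 4),(1:Fin 4)),(3,1),(0,2),(1,2)] c →
            c = (3,2)) c hperm
        exact Or.inr (Or.inr (Or.inr (Or.inl rfl)))
      · obtain rfl := (by decide : ∀ c : Fin 4 × Fin 4,
            Permits spaceship (LNSsyn (Fin 4)) [((0:Fin 4),(1:Fin 4)),(3,1),(0,2),(3,2)] c →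
            c = (1,2)) c hperm
        exact Or.inr (Or.inr (Or.inr (Or.inr rfl)))
      · exact absurd hperm ((by decide : ∀ c : Fin 4 × Fin 4,
          ¬ Permits spaceship (LNSsyn (Fin 4)) [((0:Fin 4),(1:Fin 4)),(3,1),(0,2),(1,2),(3,2)] c) c)
      · exact absurd hperm ((by decide : ∀ c : Fin 4 × Fin 4,
          ¬ Permits spaceship (LNSsyn (Fin 4)) [((0:Fin 4),(1:Fin 4)),(3,1),(0,2),(3,2),(1,2)] c) c)
  intro τ h hEx
  rcases key τ h with rfl | rfl | rfl | rfl | rfl <;> revert hEx <;> decide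

lemma noSucc4 : ∀ τ, Relation.ReflTransGen (stepRel spaceship (LNSsyn (Fin 4)))
    [((0 : Fin 4), (1 : Fin 4)), (1, 2), (0, 2)] τ → ¬ AllExpert (doCalls spaceship τ) :=
  fun τ h => noSucc2 τ (Relation.ReflTransGen.head ⟨((0 : Fin 4), (2 : Fin 4)), by decide, rfl⟩ h)

end Concrete

section Classify

/-! #### Classifying epistemically indistinguishable sequences -/

lemma classL1 : ∀ τ, Epi spaceship (Permits spaceship (LNSsyn (Fin 4))) 1 τ
    [((0 : Fin 4), (1 : Fin 4))] → τ = [(0,1)] := by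
  intro τ h
  obtain ⟨τ0, d, rfl, h0, hpd, -, hcase⟩ :=
    epi_snoc_inv h (show [((0:Fin 4),(1:Fin 4))] = [] ++ [(0,1)] from rfl)
  obtain rfl := epi_nil h0 rfl
  rcases hcase with ⟨rfl, h1, -, -⟩ | ⟨rfl, -, -, -⟩ | ⟨-, h2, -, -⟩
  · exact absurd h1 (by decide)
  · rfl
  · exact absurd rfl h2

lemma classL2 : ∀ τ, Epi spaceship (Permits spaceship (LNSsyn (Fin 4))) 0 τ
    [((0 : Fin 4), (1 : Fin 4)), (3, 1)] →
    τ = [(0,1),(3,1)] ∨ τ = [(0,1),(1,2)] := by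
  intro τ h
  obtain ⟨τ0, d, rfl, h0, hpd, -, hcase⟩ :=
    epi_snoc_inv h (show [((0:Fin 4),(1:Fin 4)),(3,1)] = [(0,1)] ++ [(3,1)] from rfl)
  obtain ⟨τ1, d1, rfl, h01, hpd1, -, hcase1⟩ :=
    epi_snoc_inv h0 (show [((0:Fin 4),(1:Fin 4))] = [] ++ [(0,1)] from rfl)
  obtain rfl := epi_nil h01 rfl
  have hd1 : d1 = ((0 : Fin 4), (1 : Fin 4)) := by
    rcases hcase1 with ⟨rfl, -, -, -⟩ | ⟨rfl, h1, -, -⟩ | ⟨h1, -, -, -⟩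
    · rfl
    · rfl
    · exact absurd rfl h1
  subst hd1
  rcases hcase with ⟨rfl, h1, -, -⟩ | ⟨rfl, h1, -, -⟩ | ⟨-, -, h3, h4⟩
  · exact absurd h1 (by decide)
  · exact absurd h1 (by decide)
  · rcases (by decide : ∀ d : Fin 4 × Fin 4,
        Permits spaceship (LNSsyn (Fin 4)) [((0:Fin 4),(1:Fin 4))] d →
        d = (0,2) ∨ d = (3,1) ∨ d = (1,2)) d hpd with rfl | rfl | rfl
    · exact absurd rfl h3
    · exact Or.inl rfl
    · exact Or.inr rfl

/-! #### Calls not permitted by the soft look-ahead strengthening of LNS -/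

lemma notQ12_nil :
    ¬ Sat spaceship [] (softLookAhead (LNSsyn (Fin 4)) 1 2) := by
  intro h
  obtain ⟨τ', hE, hbox⟩ := sat_hatK.mp (sat_conj.mp h).2
  obtain rfl := epi_nil hE rfl
  have h2 := sat_box.mp hbox ([] ++ [((1:Fin 4),(2:Fin 4))])
    (progRel_call.mpr ⟨by decide, by decide, rfl⟩)
  obtain ⟨ρ, ⟨hrun, -⟩, hEx⟩ := sat_diamondEx.mp h2
  exact noSucc1 ρ hrun hEx

lemma notQ12_01 :
    ¬ Sat spaceship [((0 : Fin 4), (1 : Fin 4))] (softLookAhead (LNSsyn (Fin 4)) 1 2) := by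
  intro h
  obtain ⟨τ', hE, hbox⟩ := sat_hatK.mp (sat_conj.mp h).2
  obtain rfl := classL1 τ' hE
  have h2 := sat_box.mp hbox ([((0:Fin 4),(1:Fin 4))] ++ [(1,2)])
    (progRel_call.mpr ⟨by decide, by decide, rfl⟩)
  obtain ⟨ρ, ⟨hrun, -⟩, hEx⟩ := sat_diamondEx.mp h2
  exact noSucc2 ρ hrun hEx

lemma notQ02_0131 :
    ¬ Sat spaceship [((0 : Fin 4), (1 : Fin 4)), (3, 1)]
      (softLookAhead (LNSsyn (Fin 4)) 0 2) := by
  intro h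
  obtain ⟨τ', hE, hbox⟩ := sat_hatK.mp (sat_conj.mp h).2
  rcases classL2 τ' hE with rfl | rfl
  · have h2 := sat_box.mp hbox ([((0:Fin 4),(1:Fin 4)),(3,1)] ++ [(0,2)])
      (progRel_call.mpr ⟨by decide, by decide, rfl⟩)
    obtain ⟨ρ, ⟨hrun, -⟩, hEx⟩ := sat_diamondEx.mp h2
    exact noSucc3 ρ hrun hEx
  · have h2 := sat_box.mp hbox ([((0:Fin 4),(1:Fin 4)),(1,2)] ++ [(0,2)])
      (progRel_call.mpr ⟨by decide, by decide, rfl⟩)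
    obtain ⟨ρ, ⟨hrun, -⟩, hEx⟩ := sat_diamondEx.mp h2
    exact noSucc4 ρ hrun hEx

lemma permQ_to_LNS {σ : List (Fin 4 × Fin 4)} {c : Fin 4 × Fin 4}
    (h : Permits spaceship (softLookAhead (LNSsyn (Fin 4))) σ c) :
    Permits spaceship (LNSsyn (Fin 4)) σ c :=
  permits_def.mpr ⟨(permits_def.mp h).1, (permits_def.mp h).2.1,
    (sat_conj.mp (permits_def.mp h).2.2).1⟩

/-! #### Classification under the soft look-ahead protocol -/

lemma QC1 : ∀ τ, Epi spaceship (Permits spaceship (softLookAhead (LNSsyn (Fin 4)))) 3 τ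
    [((0 : Fin 4), (1 : Fin 4))] → τ = [(0,1)] := by
  intro τ h
  obtain ⟨τ0, d, rfl, h0, hpd, -, hcase⟩ :=
    epi_snoc_inv h (show [((0:Fin 4),(1:Fin 4))] = [] ++ [(0,1)] from rfl)
  obtain rfl := epi_nil h0 rfl
  rcases hcase with ⟨rfl, h1, -, -⟩ | ⟨rfl, h1, -, -⟩ | ⟨-, -, h3, h4⟩
  · exact absurd h1 (by decide)
  · exact absurd h1 (by decide)
  · rcases (by decide : ∀ d : Fin 4 × Fin 4,
        Permits spaceship (LNSsyn (Fin 4)) [] d →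
        d = (0,1) ∨ d = (3,1) ∨ d = (1,2)) d (permQ_to_LNS hpd) with rfl | rfl | rfl
    · rfl
    · exact absurd rfl h3
    · exact absurd (permits_def.mp hpd).2.2 notQ12_nil

lemma QC2 : ∀ τ, Epi spaceship (Permits spaceship (softLookAhead (LNSsyn (Fin 4)))) 1 τ
    [((0 : Fin 4), (1 : Fin 4)), (3, 1)] → τ = [(0,1),(3,1)] := by
  intro τ h
  obtain ⟨τ0, d, rfl, h0, hpd, -, hcase⟩ :=
    epi_snoc_inv h (show [((0:Fin 4),(1:Fin 4)),(3,1)] = [(0,1)] ++ [(3,1)] from rfl)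
  obtain ⟨τ1, d1, rfl, h01, hpd1, -, hcase1⟩ :=
    epi_snoc_inv h0 (show [((0:Fin 4),(1:Fin 4))] = [] ++ [(0,1)] from rfl)
  obtain rfl := epi_nil h01 rfl
  have hd1 : d1 = ((0 : Fin 4), (1 : Fin 4)) := by
    rcases hcase1 with ⟨rfl, -, -, -⟩ | ⟨rfl, -, -, -⟩ | ⟨-, h2, -, -⟩
    · rfl
    · rfl
    · exact absurd rfl h2
  subst hd1
  rcases hcase with ⟨rfl, h1, -, -⟩ | ⟨rfl, -, -, -⟩ | ⟨-, h2, -, -⟩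
  · exact absurd h1 (by decide)
  · rfl
  · exact absurd rfl h2

lemma QC3a : ∀ τ, Epi spaceship (Permits spaceship (softLookAhead (LNSsyn (Fin 4)))) 0 τ
    [((0 : Fin 4), (1 : Fin 4)), (3, 1)] → τ = [(0,1),(3,1)] := by
  intro τ h
  obtain ⟨τ0, d, rfl, h0, hpd, -, hcase⟩ :=
    epi_snoc_inv h (show [((0:Fin 4),(1:Fin 4)),(3,1)] = [(0,1)] ++ [(3,1)] from rfl)
  obtain ⟨τ1, d1, rfl, h01, hpd1, -, hcase1⟩ :=
    epi_snoc_inv h0 (show [((0:Fin 4),(1:Fin 4))] = [] ++ [(0,1)] from rfl)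
  obtain rfl := epi_nil h01 rfl
  have hd1 : d1 = ((0 : Fin 4), (1 : Fin 4)) := by
    rcases hcase1 with ⟨rfl, -, -, -⟩ | ⟨rfl, h1, -, -⟩ | ⟨h1, -, -, -⟩
    · rfl
    · rfl
    · exact absurd rfl h1
  subst hd1
  rcases hcase with ⟨rfl, h1, -, -⟩ | ⟨rfl, h1, -, -⟩ | ⟨-, -, h3, h4⟩
  · exact absurd h1 (by decide)
  · exact absurd h1 (by decide)
  · rcases (by decide : ∀ d : Fin 4 × Fin 4,
        Permits spaceship (LNSsyn (Fin 4)) [((0:Fin 4),(1:Fin 4))] d →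
        d = (0,2) ∨ d = (3,1) ∨ d = (1,2)) d (permQ_to_LNS hpd) with rfl | rfl | rfl
    · exact absurd rfl h3
    · rfl
    · exact absurd (permits_def.mp hpd).2.2 notQ12_01

lemma QC3 : ∀ τ, Epi spaceship (Permits spaceship (softLookAhead (LNSsyn (Fin 4)))) 0 τ
    [((0 : Fin 4), (1 : Fin 4)), (3, 1), (1, 2)] →
    τ = [(0,1),(3,1),(1,2)] ∨ τ = [(0,1),(3,1),(3,2)] := by
  intro τ h
  obtain ⟨τ0, d, rfl, h0, hpd, -, hcase⟩ :=
    epi_snoc_inv h (show [((0:Fin 4),(1:Fin 4)),(3,1),(1,2)] = [(0,1),(3,1)] ++ [(1,2)] from rfl)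
  obtain rfl := QC3a τ0 h0
  rcases hcase with ⟨rfl, h1, -, -⟩ | ⟨rfl, h1, -, -⟩ | ⟨-, -, h3, h4⟩
  · exact absurd h1 (by decide)
  · exact absurd h1 (by decide)
  · rcases (by decide : ∀ d : Fin 4 × Fin 4,
        Permits spaceship (LNSsyn (Fin 4)) [((0:Fin 4),(1:Fin 4)),(3,1)] d →
        d = (0,2) ∨ d = (1,2) ∨ d = (3,2)) d (permQ_to_LNS hpd) with rfl | rfl | rfl
    · exact absurd rfl h3
    · exact Or.inl rfl
    · exact Or.inr rfl

lemma QC4b : ∀ τ, Epi spaceship (Permits spaceship (softLookAhead (LNSsyn (Fin 4)))) 3 τ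
    [((0 : Fin 4), (1 : Fin 4)), (3, 1)] → τ = [(0,1),(3,1)] := by
  intro τ h
  obtain ⟨τ0, d, rfl, h0, hpd, -, hcase⟩ :=
    epi_snoc_inv h (show [((0:Fin 4),(1:Fin 4)),(3,1)] = [(0,1)] ++ [(3,1)] from rfl)
  obtain rfl := QC1 τ0 h0
  rcases hcase with ⟨rfl, -, -, -⟩ | ⟨rfl, h1, -, -⟩ | ⟨h1, -, -, -⟩
  · rfl
  · exact absurd h1 (by decide)
  · exact absurd rfl h1

lemma QC4a : ∀ τ, Epi spaceship (Permits spaceship (softLookAhead (LNSsyn (Fin 4)))) 3 τ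
    [((0 : Fin 4), (1 : Fin 4)), (3, 1), (1, 2)] → τ = [(0,1),(3,1),(1,2)] := by
  intro τ h
  obtain ⟨τ0, d, rfl, h0, hpd, -, hcase⟩ :=
    epi_snoc_inv h (show [((0:Fin 4),(1:Fin 4)),(3,1),(1,2)] = [(0,1),(3,1)] ++ [(1,2)] from rfl)
  obtain rfl := QC4b τ0 h0
  rcases hcase with ⟨rfl, h1, -, -⟩ | ⟨rfl, h1, -, -⟩ | ⟨-, -, h3, h4⟩
  · exact absurd h1 (by decide)
  · exact absurd h1 (by decide)
  · rcases (by decide : ∀ d : Fin 4 × Fin 4,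
        Permits spaceship (LNSsyn (Fin 4)) [((0:Fin 4),(1:Fin 4)),(3,1)] d →
        d = (0,2) ∨ d = (1,2) ∨ d = (3,2)) d (permQ_to_LNS hpd) with rfl | rfl | rfl
    · exact absurd (permits_def.mp hpd).2.2 notQ02_0131
    · rfl
    · exact absurd rfl h3

lemma QC4 : ∀ τ, Epi spaceship (Permits spaceship (softLookAhead (LNSsyn (Fin 4)))) 3 τ
    [((0 : Fin 4), (1 : Fin 4)), (3, 1), (1, 2), (0, 2)] →
    τ = [(0,1),(3,1),(1,2),(0,2)] := by
  intro τ h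
  obtain ⟨τ0, d, rfl, h0, hpd, -, hcase⟩ :=
    epi_snoc_inv h
      (show [((0:Fin 4),(1:Fin 4)),(3,1),(1,2),(0,2)] = [(0,1),(3,1),(1,2)] ++ [(0,2)] from rfl)
  obtain rfl := QC4a τ0 h0
  rcases hcase with ⟨rfl, h1, -, -⟩ | ⟨rfl, h1, -, -⟩ | ⟨-, -, h3, h4⟩
  · exact absurd h1 (by decide)
  · exact absurd h1 (by decide)
  · rcases (by decide : ∀ d : Fin 4 × Fin 4,
        Permits spaceship (LNSsyn (Fin 4)) [((0:Fin 4),(1:Fin 4)),(3,1),(1,2)] d →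
        d = (0,2) ∨ d = (3,2)) d (permQ_to_LNS hpd) with rfl | rfl
    · rfl
    · exact absurd rfl h3

end Classify

section Positive

lemma mem_extension {G : GossipGraph A} {P : Protocol A} {σ : List (A × A)} :
    σ ∈ extension P G ↔ Ext G (Permits G P) σ := Iff.rfl

/-- Introduction rule for the soft look-ahead condition. -/
lemma satQ_intro {σ : List (Fin 4 × Fin 4)} {a b : Fin 4}
    (h1 : ¬ (doCalls spaceship σ).S a b)
    (τ' : List (Fin 4 × Fin 4))
    (hE : Epi spaceship (Permits spaceship (LNSsyn (Fin 4))) a τ' σ)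
    (ρend : List (Fin 4 × Fin 4))
    (hrun : Relation.ReflTransGen (stepRel spaceship (LNSsyn (Fin 4))) (τ' ++ [(a, b)]) ρend)
    (hterm : ∀ c : Fin 4 × Fin 4, ¬ Permits spaceship (LNSsyn (Fin 4)) ρend c)
    (hEx : AllExpert (doCalls spaceship ρend)) :
    Sat spaceship σ (softLookAhead (LNSsyn (Fin 4)) a b) := by
  refine sat_conj.mpr ⟨sat_LNS.mpr h1, sat_hatK.mpr ⟨τ', hE, sat_box.mpr ?_⟩⟩
  intro ρ hρ
  obtain ⟨hne, hN, rfl⟩ := progRel_call.mp hρ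
  exact sat_diamondEx.mpr ⟨ρend, ⟨hrun, hterm⟩, hEx⟩

/-! LNS extension chains (for the diagonal epistemic alternatives). -/

lemma ext1 : Ext spaceship (Permits spaceship (LNSsyn (Fin 4))) [((0:Fin 4),(1:Fin 4))] :=
  Ext.snoc Ext.nil (by decide)
lemma ext2 : Ext spaceship (Permits spaceship (LNSsyn (Fin 4))) [((0:Fin 4),(1:Fin 4)),(3,1)] :=
  Ext.snoc ext1 (by decide)
lemma ext3 : Ext spaceship (Permits spaceship (LNSsyn (Fin 4)))
    [((0:Fin 4),(1:Fin 4)),(3,1),(1,2)] :=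
  Ext.snoc ext2 (by decide)
lemma ext4 : Ext spaceship (Permits spaceship (LNSsyn (Fin 4)))
    [((0:Fin 4),(1:Fin 4)),(3,1),(1,2),(0,2)] :=
  Ext.snoc ext3 (by decide)
lemma ext2' : Ext spaceship (Permits spaceship (LNSsyn (Fin 4)))
    [((0:Fin 4),(1:Fin 4)),(3,1),(3,2)] :=
  Ext.snoc ext2 (by decide)
lemma ext3' : Ext spaceship (Permits spaceship (LNSsyn (Fin 4)))
    [((0:Fin 4),(1:Fin 4)),(3,1),(3,2),(0,2)] :=
  Ext.snoc ext2' (by decide)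

/-! The successful LNS run `01;31;12;02;32` and its suffixes. -/

lemma run0 : Relation.ReflTransGen (stepRel spaceship (LNSsyn (Fin 4)))
    [((0:Fin 4),(1:Fin 4)),(3,1),(1,2),(0,2),(3,2)]
    [((0:Fin 4),(1:Fin 4)),(3,1),(1,2),(0,2),(3,2)] := Relation.ReflTransGen.refl
lemma run1 : Relation.ReflTransGen (stepRel spaceship (LNSsyn (Fin 4)))
    [((0:Fin 4),(1:Fin 4)),(3,1),(1,2),(0,2)]
    [((0:Fin 4),(1:Fin 4)),(3,1),(1,2),(0,2),(3,2)] :=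
  Relation.ReflTransGen.head ⟨((3:Fin 4),(2:Fin 4)), by decide, rfl⟩ run0
lemma run2 : Relation.ReflTransGen (stepRel spaceship (LNSsyn (Fin 4)))
    [((0:Fin 4),(1:Fin 4)),(3,1),(1,2)]
    [((0:Fin 4),(1:Fin 4)),(3,1),(1,2),(0,2),(3,2)] :=
  Relation.ReflTransGen.head ⟨((0:Fin 4),(2:Fin 4)), by decide, rfl⟩ run1
lemma run3 : Relation.ReflTransGen (stepRel spaceship (LNSsyn (Fin 4)))
    [((0:Fin 4),(1:Fin 4)),(3,1)]
    [((0:Fin 4),(1:Fin 4)),(3,1),(1,2),(0,2),(3,2)] :=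
  Relation.ReflTransGen.head ⟨((1:Fin 4),(2:Fin 4)), by decide, rfl⟩ run2
lemma run4 : Relation.ReflTransGen (stepRel spaceship (LNSsyn (Fin 4)))
    [((0:Fin 4),(1:Fin 4))]
    [((0:Fin 4),(1:Fin 4)),(3,1),(1,2),(0,2),(3,2)] :=
  Relation.ReflTransGen.head ⟨((3:Fin 4),(1:Fin 4)), by decide, rfl⟩ run3

/-! The positive soft look-ahead permissions along the main sequence. -/

lemma q01 : Sat spaceship [] (softLookAhead (LNSsyn (Fin 4)) 0 1) :=
  satQ_intro (by decide) [] Epi.refl _ run4 (by decide) (by decide)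

lemma q31 : Sat spaceship [((0:Fin 4),(1:Fin 4))] (softLookAhead (LNSsyn (Fin 4)) 3 1) :=
  satQ_intro (by decide) _ (epi_of_ext 3 ext1) _ run3 (by decide) (by decide)

lemma q12a : Sat spaceship [((0:Fin 4),(1:Fin 4)),(3,1)]
    (softLookAhead (LNSsyn (Fin 4)) 1 2) :=
  satQ_intro (by decide) _ (epi_of_ext 1 ext2) _ run2 (by decide) (by decide)

lemma q02 : Sat spaceship [((0:Fin 4),(1:Fin 4)),(3,1),(1,2)]
    (softLookAhead (LNSsyn (Fin 4)) 0 2) :=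
  satQ_intro (by decide) _ (epi_of_ext 0 ext3) _ run1 (by decide) (by decide)

lemma q32 : Sat spaceship [((0:Fin 4),(1:Fin 4)),(3,1),(1,2),(0,2)]
    (softLookAhead (LNSsyn (Fin 4)) 3 2) :=
  satQ_intro (by decide) _ (epi_of_ext 3 ext4) _ run0 (by decide) (by decide)

lemma q12b : Sat spaceship [((0:Fin 4),(1:Fin 4)),(3,1),(3,2),(0,2)]
    (softLookAhead (LNSsyn (Fin 4)) 1 2) :=
  satQ_intro (by decide) _ (epi_of_ext 1 ext3')
    ([((0:Fin 4),(1:Fin 4)),(3,1),(3,2),(0,2)] ++ [(1,2)])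
    Relation.ReflTransGen.refl (by decide) (by decide)

end Positive

section Main

lemma B1 : Sat spaceship [] (Form.K 0 (softLookAhead (LNSsyn (Fin 4)))
    (Form.box (Prog.call 0 1) (oneStepBody (Fin 4) (softLookAhead (LNSsyn (Fin 4)))))) := by
  refine sat_K.mpr fun τ hτ => ?_
  obtain rfl := epi_nil hτ rfl
  refine sat_box.mpr fun ρ hρ => ?_
  obtain ⟨-, -, rfl⟩ := progRel_call.mp hρ
  exact sat_oneStepBody.mpr (Or.inr ⟨((3:Fin 4),(1:Fin 4)),
    permits_def.mpr ⟨by decide, by decide, q31⟩⟩)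

lemma B2 : Sat spaceship [((0:Fin 4),(1:Fin 4))]
    (Form.K 3 (softLookAhead (LNSsyn (Fin 4)))
    (Form.box (Prog.call 3 1) (oneStepBody (Fin 4) (softLookAhead (LNSsyn (Fin 4)))))) := by
  refine sat_K.mpr fun τ hτ => ?_
  obtain rfl := QC1 τ hτ
  refine sat_box.mpr fun ρ hρ => ?_
  obtain ⟨-, -, rfl⟩ := progRel_call.mp hρ
  exact sat_oneStepBody.mpr (Or.inr ⟨((1:Fin 4),(2:Fin 4)),
    permits_def.mpr ⟨by decide, by decide, q12a⟩⟩)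

lemma B3 : Sat spaceship [((0:Fin 4),(1:Fin 4)),(3,1)]
    (Form.K 1 (softLookAhead (LNSsyn (Fin 4)))
    (Form.box (Prog.call 1 2) (oneStepBody (Fin 4) (softLookAhead (LNSsyn (Fin 4)))))) := by
  refine sat_K.mpr fun τ hτ => ?_
  obtain rfl := QC2 τ hτ
  refine sat_box.mpr fun ρ hρ => ?_
  obtain ⟨-, -, rfl⟩ := progRel_call.mp hρ
  exact sat_oneStepBody.mpr (Or.inr ⟨((0:Fin 4),(2:Fin 4)),
    permits_def.mpr ⟨by decide, by decide, q02⟩⟩)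

lemma B4 : Sat spaceship [((0:Fin 4),(1:Fin 4)),(3,1),(1,2)]
    (Form.K 0 (softLookAhead (LNSsyn (Fin 4)))
    (Form.box (Prog.call 0 2) (oneStepBody (Fin 4) (softLookAhead (LNSsyn (Fin 4)))))) := by
  refine sat_K.mpr fun τ hτ => ?_
  rcases QC3 τ hτ with rfl | rfl
  · refine sat_box.mpr fun ρ hρ => ?_
    obtain ⟨-, -, rfl⟩ := progRel_call.mp hρ
    exact sat_oneStepBody.mpr (Or.inr ⟨((3:Fin 4),(2:Fin 4)),
      permits_def.mpr ⟨by decide, by decide, q32⟩⟩)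
  · refine sat_box.mpr fun ρ hρ => ?_
    obtain ⟨-, -, rfl⟩ := progRel_call.mp hρ
    exact sat_oneStepBody.mpr (Or.inr ⟨((1:Fin 4),(2:Fin 4)),
      permits_def.mpr ⟨by decide, by decide, q12b⟩⟩)

lemma B5 : Sat spaceship [((0:Fin 4),(1:Fin 4)),(3,1),(1,2),(0,2)]
    (Form.K 3 (softLookAhead (LNSsyn (Fin 4)))
    (Form.box (Prog.call 3 2) (oneStepBody (Fin 4) (softLookAhead (LNSsyn (Fin 4)))))) := by
  refine sat_K.mpr fun τ hτ => ?_
  obtain rfl := QC4 τ hτ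
  refine sat_box.mpr fun ρ hρ => ?_
  obtain ⟨-, -, rfl⟩ := progRel_call.mp hρ
  exact sat_oneStepBody.mpr (Or.inl (by decide))

lemma mem3 : [((0 : Fin 4), (1 : Fin 4)), (3, 1), (1, 2), (0, 2), (3, 2)] ∈
    extension (hardOneStep (softLookAhead (LNSsyn (Fin 4)))) spaceship := by
  have P1 : Permits spaceship (hardOneStep (softLookAhead (LNSsyn (Fin 4))))
      [] ((0:Fin 4),(1:Fin 4)) :=
    permits_def.mpr ⟨by decide, by decide, sat_conj.mpr ⟨q01, B1⟩⟩
  have P2 : Permits spaceship (hardOneStep (softLookAhead (LNSsyn (Fin 4))))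
      [((0:Fin 4),(1:Fin 4))] ((3:Fin 4),(1:Fin 4)) :=
    permits_def.mpr ⟨by decide, by decide, sat_conj.mpr ⟨q31, B2⟩⟩
  have P3 : Permits spaceship (hardOneStep (softLookAhead (LNSsyn (Fin 4))))
      [((0:Fin 4),(1:Fin 4)),(3,1)] ((1:Fin 4),(2:Fin 4)) :=
    permits_def.mpr ⟨by decide, by decide, sat_conj.mpr ⟨q12a, B3⟩⟩
  have P4 : Permits spaceship (hardOneStep (softLookAhead (LNSsyn (Fin 4))))
      [((0:Fin 4),(1:Fin 4)),(3,1),(1,2)] ((0:Fin 4),(2:Fin 4)) :=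
    permits_def.mpr ⟨by decide, by decide, sat_conj.mpr ⟨q02, B4⟩⟩
  have P5 : Permits spaceship (hardOneStep (softLookAhead (LNSsyn (Fin 4))))
      [((0:Fin 4),(1:Fin 4)),(3,1),(1,2),(0,2)] ((3:Fin 4),(2:Fin 4)) :=
    permits_def.mpr ⟨by decide, by decide, sat_conj.mpr ⟨q32, B5⟩⟩
  exact mem_extension.mpr
    (Ext.snoc (Ext.snoc (Ext.snoc (Ext.snoc (Ext.snoc Ext.nil P1) P2) P3) P4) P5)

lemma not_mem4 : [((0 : Fin 4), (1 : Fin 4)), (3, 1), (1, 2), (0, 2), (3, 2)] ∉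
    extension (hardOneStep (LNSsyn (Fin 4))) spaceship := by
  intro h
  obtain ⟨h4, hp⟩ := ext_snoc_inv (mem_extension.mp h)
    (show [((0 : Fin 4), (1 : Fin 4)), (3, 1), (1, 2), (0, 2), (3, 2)] =
      [(0,1),(3,1),(1,2),(0,2)] ++ [(3,2)] from rfl)
  have hK := (sat_conj.mp (permits_def.mp hp).2.2).2
  -- the epistemic alternative 01;31;02;12 for agent 3
  have e0 : Epi spaceship (Permits spaceship (LNSsyn (Fin 4))) 3 [] [] := Epi.refl
  have p1 : Permits spaceship (LNSsyn (Fin 4)) [] ((0:Fin 4),(1:Fin 4)) := by decide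
  have e1 : Epi spaceship (Permits spaceship (LNSsyn (Fin 4))) 3
      [((0:Fin 4),(1:Fin 4))] [((0:Fin 4),(1:Fin 4))] :=
    Epi.other e0 (by decide) (by decide) (by decide) (by decide) p1 p1
  have p2 : Permits spaceship (LNSsyn (Fin 4)) [((0:Fin 4),(1:Fin 4))] ((3:Fin 4),(1:Fin 4)) :=
    by decide
  have e2 : Epi spaceship (Permits spaceship (LNSsyn (Fin 4))) 3
      [((0:Fin 4),(1:Fin 4)),(3,1)] [((0:Fin 4),(1:Fin 4)),(3,1)] :=
    Epi.call_out (b := 1) e1 (fun _ => Iff.rfl) (fun _ => Iff.rfl) p2 p2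
  have p3l : Permits spaceship (LNSsyn (Fin 4)) [((0:Fin 4),(1:Fin 4)),(3,1)]
      ((0:Fin 4),(2:Fin 4)) := by decide
  have p3r : Permits spaceship (LNSsyn (Fin 4)) [((0:Fin 4),(1:Fin 4)),(3,1)]
      ((1:Fin 4),(2:Fin 4)) := by decide
  have e3 : Epi spaceship (Permits spaceship (LNSsyn (Fin 4))) 3
      [((0:Fin 4),(1:Fin 4)),(3,1),(0,2)] [((0:Fin 4),(1:Fin 4)),(3,1),(1,2)] :=
    Epi.other e2 (by decide) (by decide) (by decide) (by decide) p3l p3r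
  have p4l : Permits spaceship (LNSsyn (Fin 4)) [((0:Fin 4),(1:Fin 4)),(3,1),(0,2)]
      ((1:Fin 4),(2:Fin 4)) := by decide
  have p4r : Permits spaceship (LNSsyn (Fin 4)) [((0:Fin 4),(1:Fin 4)),(3,1),(1,2)]
      ((0:Fin 4),(2:Fin 4)) := by decide
  have W : Epi spaceship (Permits spaceship (LNSsyn (Fin 4))) 3
      [((0:Fin 4),(1:Fin 4)),(3,1),(0,2),(1,2)] [((0:Fin 4),(1:Fin 4)),(3,1),(1,2),(0,2)] :=
    Epi.other e3 (by decide) (by decide) (by decide) (by decide) p4l p4r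
  have hbox := sat_K.mp hK _ W
  have hres := sat_box.mp hbox ([((0:Fin 4),(1:Fin 4)),(3,1),(0,2),(1,2)] ++ [(3,2)])
    (progRel_call.mpr ⟨by decide, by decide, rfl⟩)
  rcases sat_oneStepBody.mp hres with hEx | ⟨c, hc⟩
  · exact absurd hEx (by decide)
  · exact (by decide : ∀ c : Fin 4 × Fin 4, ¬ Permits spaceship (LNSsyn (Fin 4))
      [((0:Fin 4),(1:Fin 4)),(3,1),(0,2),(1,2),(3,2)] c) c hc

lemma conj2 : ∀ G : GossipGraph (Fin 4), Initial G →
    extension (softLookAhead (LNSsyn (Fin 4))) G ⊆ extension (LNSsyn (Fin 4)) G := by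
  intro G _ σ hσ
  have h : Ext G (Permits G (softLookAhead (LNSsyn (Fin 4)))) σ := hσ
  show Ext G (Permits G (LNSsyn (Fin 4))) σ
  clear hσ
  induction h with
  | nil => exact Ext.nil
  | snoc h1 h2 ih =>
      exact Ext.snoc ih (permits_def.mpr ⟨(permits_def.mp h2).1,
        (permits_def.mp h2).2.1, (sat_conj.mp (permits_def.mp h2).2.2).1⟩)

end Main

/-- Hard one-step strengthening is not monotone: on the spaceship graph, with
`Q = LNS^♦ ⊆ P = LNS`, the sequence `01;31;12;02;32` is in `Q^□(G)` but not in `P^□(G)`. -/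
theorem hard_onestep_not_monotone :
    Initial spaceship ∧
    (∀ G : GossipGraph (Fin 4), Initial G →
      extension (softLookAhead (LNSsyn (Fin 4))) G ⊆ extension (LNSsyn (Fin 4)) G) ∧
    ([((0 : Fin 4), (1 : Fin 4)), (3, 1), (1, 2), (0, 2), (3, 2)] ∈
      extension (hardOneStep (softLookAhead (LNSsyn (Fin 4)))) spaceship) ∧
    ([((0 : Fin 4), (1 : Fin 4)), (3, 1), (1, 2), (0, 2), (3, 2)] ∉
      extension (hardOneStep (LNSsyn (Fin 4))) spaceship) ∧
    ¬ (extension (hardOneStep (softLookAhead (LNSsyn (Fin 4)))) spaceship ⊆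
        extension (hardOneStep (LNSsyn (Fin 4))) spaceship) := by
  exact ⟨fun _ _ => Iff.rfl, conj2, mem3, not_mem4, fun hsub => not_mem4 (hsub mem3)⟩

end Gossip
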